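/- For two subspaces U and W of R^n with orthogonal projection matrices P_U and P_W, the operator norm ‖P_U − P_W‖ equals the sine of the largest principal angle between U and W whenever dim U = dim W. -/

import Mathlib

open Matrix

/-- View a plain vector as an element of Euclidean space. -/
noncomputable def toEuc {n : ℕ} (v : Fin n → ℝ) : EuclideanSpace ℝ (Fin n) := WithLp.toLp 2 v

/-- The row space of a matrix, as a subspace of Euclidean space `ℝ^n`. -/
noncomputable def rowSpace {m : Type*} {n : ℕ} (A : Matrix m (Fin n) ℝ) :
    Submodule ℝ (EuclideanSpace ℝ (Fin n)) :=
  Submodule.span ℝ (Set.range fun i => toEuc (A i))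

/-- The orthogonal projection matrix onto a subspace of `ℝ^n`. -/
noncomputable def projMat {n : ℕ} (U : Submodule ℝ (EuclideanSpace ℝ (Fin n))) :
    Matrix (Fin n) (Fin n) ℝ :=
  Matrix.toEuclideanLin.symm (U.subtype ∘ₗ U.orthogonalProjectionOnto.toLinearMap)

/-- The operator (spectral) norm of a matrix. -/
noncomputable def opNorm {m : Type*} [Fintype m] {n : ℕ} (A : Matrix m (Fin n) ℝ) : ℝ :=
  ‖(Matrix.toEuclideanLin A).toContinuousLinearMap‖

/-- Singular values of a matrix, in ascending order. -/
noncomputable def svalAsc {m : Type*} [Fintype m] {n : ℕ} (A : Matrix m (Fin n) ℝ) :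
    Fin n → ℝ := fun i =>
  Real.sqrt ((show (Aᵀ * A).IsHermitian by simpa [Matrix.conjTranspose_eq_transpose_of_trivial] using
      Matrix.isHermitian_conjTranspose_mul_self A).eigenvalues
    (Tuple.sort (show (Aᵀ * A).IsHermitian by simpa [Matrix.conjTranspose_eq_transpose_of_trivial] using
      Matrix.isHermitian_conjTranspose_mul_self A).eigenvalues i))

/-- Singular values of a matrix, in descending order (`svalDesc A 0` is the largest). -/
noncomputable def svalDesc {m : Type*} [Fintype m] {n : ℕ} (A : Matrix m (Fin n) ℝ)
    (i : Fin n) : ℝ :=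
  svalAsc A i.rev

section Auxiliary

open scoped Matrix.Norms.L2Operator

lemma dot_eq_inner {k : ℕ} (x y : Fin k → ℝ) : x ⬝ᵥ y = inner ℝ (toEuc x) (toEuc y) := by
  simp [PiLp.inner_apply, toEuc, dotProduct, mul_comm]

lemma dot_self_eq_norm_sq {k : ℕ} (x : Fin k → ℝ) : x ⬝ᵥ x = ‖toEuc x‖ ^ 2 := by
  rw [dot_eq_inner, real_inner_self_eq_norm_sq]

lemma dot_self_nonneg' {k : ℕ} (x : Fin k → ℝ) : 0 ≤ x ⬝ᵥ x := by
  rw [dot_self_eq_norm_sq]; positivity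

lemma norm_mulVec_le {m k : ℕ} (A : Matrix (Fin m) (Fin k) ℝ) (x : Fin k → ℝ) :
    ‖toEuc (A *ᵥ x)‖ ≤ ‖A‖ * ‖toEuc x‖ :=
  A.l2_opNorm_mulVec (toEuc x)

lemma opNorm_le_of_forall {m k : ℕ} (A : Matrix (Fin m) (Fin k) ℝ) {c : ℝ} (hc : 0 ≤ c)
    (h : ∀ x : Fin k → ℝ, ‖toEuc (A *ᵥ x)‖ ≤ c * ‖toEuc x‖) : ‖A‖ ≤ c := by
  rw [Matrix.l2_opNorm_def]
  exact ContinuousLinearMap.opNorm_le_bound _ hc fun x => h x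

lemma dot_mulVec_eq {a b : ℕ} (A : Matrix (Fin a) (Fin b) ℝ) (x : Fin a → ℝ) (u : Fin b → ℝ) :
    x ⬝ᵥ (A *ᵥ u) = (Aᵀ *ᵥ x) ⬝ᵥ u := by
  rw [Matrix.dotProduct_mulVec, Matrix.mulVec_transpose]

lemma le_of_sq_le_sq' {a b : ℝ} (hb : 0 ≤ b) (h : a ^ 2 ≤ b ^ 2) (ha : 0 ≤ a) : a ≤ b := by
  calc a = Real.sqrt (a ^ 2) := (Real.sqrt_sq ha).symm
    _ ≤ Real.sqrt (b ^ 2) := Real.sqrt_le_sqrt h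
    _ = b := Real.sqrt_sq hb

lemma normT {m k : ℕ} (A : Matrix (Fin m) (Fin k) ℝ) : ‖Aᵀ‖ = ‖A‖ := by
  rw [← Matrix.conjTranspose_eq_transpose_of_trivial, Matrix.l2_opNorm_conjTranspose]

lemma norm_transpose_mul_self {m k : ℕ} (A : Matrix (Fin m) (Fin k) ℝ) :
    ‖Aᵀ * A‖ = ‖A‖ * ‖A‖ := by
  rw [← Matrix.conjTranspose_eq_transpose_of_trivial, Matrix.l2_opNorm_conjTranspose_mul_self]

lemma norm_one_matrix {p : ℕ} (hp : 0 < p) : ‖(1 : Matrix (Fin p) (Fin p) ℝ)‖ = 1 := by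
  have hnt : Nontrivial (EuclideanSpace ℝ (Fin p)) := by
    refine ⟨⟨0, toEuc (fun _ => 1), fun hcon => ?_⟩⟩
    have := congrArg (fun v : EuclideanSpace ℝ (Fin p) => v ⟨0, hp⟩) hcon
    simp [toEuc] at this
  rw [Matrix.l2_opNorm_def]
  have : (Matrix.toEuclideanLin.trans LinearMap.toContinuousLinearMap)
      (1 : Matrix (Fin p) (Fin p) ℝ) = ContinuousLinearMap.id ℝ (EuclideanSpace ℝ (Fin p)) := by
    ext x i
    simp [Matrix.toEuclideanLin_apply, Matrix.one_mulVec]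
  rw [this, ContinuousLinearMap.norm_id]

lemma norm_eq_one_of_sq {a : ℝ} (ha : 0 ≤ a) (h : a * a = 1) : a = 1 := by
  nlinarith [sq_nonneg (a - 1), sq_nonneg (a + 1)]

/-- Rayleigh upper bound by the operator norm. -/
lemma quad_le_norm {k : ℕ} (S : Matrix (Fin k) (Fin k) ℝ) (x : Fin k → ℝ) :
    x ⬝ᵥ (S *ᵥ x) ≤ ‖S‖ * (x ⬝ᵥ x) := by
  have h1 : x ⬝ᵥ (S *ᵥ x) = inner ℝ (toEuc x) (toEuc (S *ᵥ x)) := dot_eq_inner _ _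
  calc x ⬝ᵥ (S *ᵥ x) ≤ ‖toEuc x‖ * ‖toEuc (S *ᵥ x)‖ := h1 ▸ real_inner_le_norm _ _
    _ ≤ ‖toEuc x‖ * (‖S‖ * ‖toEuc x‖) :=
        mul_le_mul_of_nonneg_left (norm_mulVec_le S x) (norm_nonneg _)
    _ = ‖S‖ * (x ⬝ᵥ x) := by rw [dot_self_eq_norm_sq]; ring

/-- Generalized Cauchy–Schwarz for a positive semidefinite symmetric quadratic form. -/
lemma quad_cauchy_schwarz {k : ℕ} (S : Matrix (Fin k) (Fin k) ℝ) (hsym : Sᵀ = S)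
    (h0 : ∀ z : Fin k → ℝ, 0 ≤ z ⬝ᵥ (S *ᵥ z)) (x y : Fin k → ℝ) :
    (x ⬝ᵥ (S *ᵥ y)) ^ 2 ≤ (x ⬝ᵥ (S *ᵥ x)) * (y ⬝ᵥ (S *ᵥ y)) := by
  have hsymm : ∀ u v : Fin k → ℝ, u ⬝ᵥ (S *ᵥ v) = v ⬝ᵥ (S *ᵥ u) := by
    intro u v
    rw [Matrix.dotProduct_mulVec, ← Matrix.mulVec_transpose, hsym, dotProduct_comm]
  have key : ∀ t : ℝ, 0 ≤ (y ⬝ᵥ (S *ᵥ y)) * (t * t) + (2 * (x ⬝ᵥ (S *ᵥ y))) * t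
      + (x ⬝ᵥ (S *ᵥ x)) := by
    intro t
    have := h0 (x + t • y)
    have expand : (x + t • y) ⬝ᵥ (S *ᵥ (x + t • y)) =
        (y ⬝ᵥ (S *ᵥ y)) * (t * t) + (2 * (x ⬝ᵥ (S *ᵥ y))) * t + (x ⬝ᵥ (S *ᵥ x)) := by
      rw [Matrix.mulVec_add, Matrix.mulVec_smul]
      simp only [dotProduct_add, add_dotProduct, smul_dotProduct,
        dotProduct_smul, smul_eq_mul]
      rw [hsymm y x]
      ring
    linarith [expand ▸ this]
  have hd := discrim_le_zero key
  rw [discrim] at hd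
  nlinarith [hd]

/-- The norm of a symmetric PSD matrix is bounded by a bound on its quadratic form. -/
lemma norm_le_of_quad_le {k : ℕ} (S : Matrix (Fin k) (Fin k) ℝ) (hsym : Sᵀ = S)
    (h0 : ∀ z : Fin k → ℝ, 0 ≤ z ⬝ᵥ (S *ᵥ z)) {c : ℝ} (hc : 0 ≤ c)
    (h : ∀ x : Fin k → ℝ, x ⬝ᵥ (S *ᵥ x) ≤ c * (x ⬝ᵥ x)) : ‖S‖ ≤ c := by
  apply opNorm_le_of_forall S hc
  intro x
  have hkey : ‖toEuc (S *ᵥ x)‖ ^ 2 * ‖toEuc (S *ᵥ x)‖ ^ 2 ≤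
      (c * ‖toEuc x‖) ^ 2 * ‖toEuc (S *ᵥ x)‖ ^ 2 := by
    have h1 : (x ⬝ᵥ (S *ᵥ (S *ᵥ x))) ^ 2 ≤ (x ⬝ᵥ (S *ᵥ x)) * ((S *ᵥ x) ⬝ᵥ (S *ᵥ (S *ᵥ x))) :=
      quad_cauchy_schwarz S hsym h0 x (S *ᵥ x)
    have h2 : x ⬝ᵥ (S *ᵥ (S *ᵥ x)) = ‖toEuc (S *ᵥ x)‖ ^ 2 := by
      rw [Matrix.dotProduct_mulVec, ← Matrix.mulVec_transpose, hsym, dot_self_eq_norm_sq]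
    have h3 : (S *ᵥ x) ⬝ᵥ (S *ᵥ (S *ᵥ x)) ≤ c * ((S *ᵥ x) ⬝ᵥ (S *ᵥ x)) := h _
    have h4 : x ⬝ᵥ (S *ᵥ x) ≤ c * (x ⬝ᵥ x) := h x
    have h5 : 0 ≤ x ⬝ᵥ (S *ᵥ x) := h0 x
    have h6 : (S *ᵥ x) ⬝ᵥ (S *ᵥ x) = ‖toEuc (S *ᵥ x)‖ ^ 2 := dot_self_eq_norm_sq _
    have h7 : x ⬝ᵥ x = ‖toEuc x‖ ^ 2 := dot_self_eq_norm_sq _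
    calc ‖toEuc (S *ᵥ x)‖ ^ 2 * ‖toEuc (S *ᵥ x)‖ ^ 2
        = (x ⬝ᵥ (S *ᵥ (S *ᵥ x))) ^ 2 := by rw [h2]; ring
      _ ≤ (x ⬝ᵥ (S *ᵥ x)) * ((S *ᵥ x) ⬝ᵥ (S *ᵥ (S *ᵥ x))) := h1
      _ ≤ (c * (x ⬝ᵥ x)) * (c * ((S *ᵥ x) ⬝ᵥ (S *ᵥ x))) :=
          mul_le_mul h4 h3 (h0 _) (by nlinarith [sq_nonneg (‖toEuc x‖)])
      _ = (c * ‖toEuc x‖) ^ 2 * ‖toEuc (S *ᵥ x)‖ ^ 2 := by rw [h6, h7]; ring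
  have hnn : (0:ℝ) ≤ c * ‖toEuc x‖ := mul_nonneg hc (norm_nonneg _)
  rcases eq_or_lt_of_le (sq_nonneg (‖toEuc (S *ᵥ x)‖)) with h | hpos
  · have : ‖toEuc (S *ᵥ x)‖ = 0 := by nlinarith [sq_nonneg ‖toEuc (S *ᵥ x)‖]
    simpa [this] using hnn
  · have h8 : ‖toEuc (S *ᵥ x)‖ ^ 2 ≤ (c * ‖toEuc x‖) ^ 2 :=
      le_of_mul_le_mul_right (by linarith [hkey]) hpos
    calc ‖toEuc (S *ᵥ x)‖ = Real.sqrt (‖toEuc (S *ᵥ x)‖ ^ 2) := (Real.sqrt_sq (norm_nonneg _)).symm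
      _ ≤ Real.sqrt ((c * ‖toEuc x‖) ^ 2) := Real.sqrt_le_sqrt h8
      _ = c * ‖toEuc x‖ := Real.sqrt_sq hnn

section eig
variable {k : ℕ} {S : Matrix (Fin k) (Fin k) ℝ}

lemma herm_transpose (hS : S.IsHermitian) : Sᵀ = S := by
  rw [← Matrix.conjTranspose_eq_transpose_of_trivial]; exact hS

lemma repr_mulVec (hS : S.IsHermitian) (x : Fin k → ℝ) (i : Fin k) :
    hS.eigenvectorBasis.repr (toEuc (S *ᵥ x)) i
      = hS.eigenvalues i * hS.eigenvectorBasis.repr (toEuc x) i := by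
  set b := hS.eigenvectorBasis with hb
  calc b.repr (toEuc (S *ᵥ x)) i = inner ℝ (b i) (toEuc (S *ᵥ x)) := b.repr_apply_apply _ _
    _ = (⇑(b i)) ⬝ᵥ (S *ᵥ x) := (dot_eq_inner (⇑(b i)) (S *ᵥ x)).symm
    _ = (S *ᵥ ⇑(b i)) ⬝ᵥ x := by
        rw [Matrix.dotProduct_mulVec, ← Matrix.mulVec_transpose, herm_transpose hS]
    _ = (hS.eigenvalues i • ⇑(b i)) ⬝ᵥ x := by rw [hS.mulVec_eigenvectorBasis]
    _ = hS.eigenvalues i * ((⇑(b i)) ⬝ᵥ x) := by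
        simp [smul_dotProduct]
    _ = hS.eigenvalues i * b.repr (toEuc x) i := by
        rw [dot_eq_inner]
        exact congrArg (fun t => hS.eigenvalues i * t) (b.repr_apply_apply (toEuc x) i).symm

lemma quad_eq_sum_eig (hS : S.IsHermitian) (x : Fin k → ℝ) :
    x ⬝ᵥ (S *ᵥ x) = ∑ i, hS.eigenvalues i * (hS.eigenvectorBasis.repr (toEuc x) i) ^ 2 := by
  set b := hS.eigenvectorBasis with hb
  rw [dot_eq_inner]
  rw [← b.repr.inner_map_map (toEuc x) (toEuc (S *ᵥ x))]
  rw [PiLp.inner_apply]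
  refine Finset.sum_congr rfl fun i _ => ?_
  rw [repr_mulVec hS x i]
  simp [RCLike.inner_apply]
  ring

lemma dot_self_eq_sum_repr (hS : S.IsHermitian) (x : Fin k → ℝ) :
    x ⬝ᵥ x = ∑ i, (hS.eigenvectorBasis.repr (toEuc x) i) ^ 2 := by
  set b := hS.eigenvectorBasis with hb
  rw [dot_eq_inner, ← b.repr.inner_map_map (toEuc x) (toEuc x), PiLp.inner_apply]
  refine Finset.sum_congr rfl fun i _ => ?_
  simp [RCLike.inner_apply]

lemma quad_ge_mu (hS : S.IsHermitian) {μ : ℝ} (hμ : ∀ i, μ ≤ hS.eigenvalues i) (x : Fin k → ℝ) :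
    μ * (x ⬝ᵥ x) ≤ x ⬝ᵥ (S *ᵥ x) := by
  rw [quad_eq_sum_eig hS, dot_self_eq_sum_repr hS, Finset.mul_sum]
  exact Finset.sum_le_sum fun i _ => mul_le_mul_of_nonneg_right (hμ i) (sq_nonneg _)

lemma eigenvector_dot_self (hS : S.IsHermitian) (j : Fin k) :
    (⇑(hS.eigenvectorBasis j)) ⬝ᵥ (⇑(hS.eigenvectorBasis j)) = 1 := by
  have h := hS.eigenvectorBasis.orthonormal.1 j
  have : (⇑(hS.eigenvectorBasis j) : Fin k → ℝ) ⬝ᵥ (⇑(hS.eigenvectorBasis j)) =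
      ‖hS.eigenvectorBasis j‖ ^ 2 := dot_self_eq_norm_sq (⇑(hS.eigenvectorBasis j))
  rw [this, h]; norm_num

end eig

lemma sort_zero_min {k : ℕ} (hk : 0 < k) (f : Fin k → ℝ) (i : Fin k) :
    f (Tuple.sort f ⟨0, hk⟩) ≤ f i := by
  have hm := Tuple.monotone_sort f
  have h1 : f i = (f ∘ Tuple.sort f) ((Tuple.sort f).symm i) := by simp
  rw [h1]
  exact hm (by simp [Fin.le_def])

lemma goodBound_transpose {k : ℕ} (C : Matrix (Fin k) (Fin k) ℝ) {μ : ℝ}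
    (h : ∀ x : Fin k → ℝ, μ * (x ⬝ᵥ x) ≤ (C *ᵥ x) ⬝ᵥ (C *ᵥ x)) (x : Fin k → ℝ) :
    μ * (x ⬝ᵥ x) ≤ (Cᵀ *ᵥ x) ⬝ᵥ (Cᵀ *ᵥ x) := by
  rcases le_or_gt μ 0 with hμ | hμ
  · exact le_trans (mul_nonpos_of_nonpos_of_nonneg hμ (dot_self_nonneg' x)) (dot_self_nonneg' _)
  have hdet : C.det ≠ 0 := by
    intro hd
    obtain ⟨v, hv0, hv⟩ := (Matrix.exists_mulVec_eq_zero_iff).mpr hd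
    have h1 := h v
    rw [hv] at h1
    have h2 : (0:ℝ) < v ⬝ᵥ v := by
      rcases lt_or_eq_of_le (dot_self_nonneg' v) with h3 | h3
      · exact h3
      · exfalso; exact hv0 ((dotProduct_self_eq_zero).mp h3.symm)
    simp at h1
    nlinarith
  have hu : IsUnit C.det := isUnit_iff_ne_zero.mpr hdet
  have hsqrtpos : (0:ℝ) < Real.sqrt μ := Real.sqrt_pos.mpr hμ
  have hCinv : ‖C⁻¹‖ ≤ 1 / Real.sqrt μ := by
    apply opNorm_le_of_forall _ (by positivity)
    intro y
    set w := C⁻¹ *ᵥ y with hw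
    have hcw : C *ᵥ w = y := by
      rw [hw, Matrix.mulVec_mulVec, Matrix.mul_nonsing_inv C hu, Matrix.one_mulVec]
    have h1 := h w
    rw [hcw] at h1
    rw [dot_self_eq_norm_sq, dot_self_eq_norm_sq] at h1
    apply le_of_sq_le_sq' (by positivity) _ (norm_nonneg _)
    rw [mul_pow]
    rw [div_pow, one_pow, Real.sq_sqrt hμ.le]
    rw [div_mul_eq_mul_div, le_div_iff₀ hμ]
    linarith
  have htr : ‖(C⁻¹)ᵀ‖ ≤ 1 / Real.sqrt μ := by rw [normT]; exact hCinv
  have hx1 : ((C⁻¹)ᵀ) *ᵥ (Cᵀ *ᵥ x) = x := by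
    rw [Matrix.mulVec_mulVec, ← Matrix.transpose_mul, Matrix.mul_nonsing_inv C hu,
      Matrix.transpose_one, Matrix.one_mulVec]
  have h2 : ‖toEuc x‖ ≤ (1 / Real.sqrt μ) * ‖toEuc (Cᵀ *ᵥ x)‖ := by
    calc ‖toEuc x‖ = ‖toEuc ((C⁻¹)ᵀ *ᵥ (Cᵀ *ᵥ x))‖ := by rw [hx1]
      _ ≤ ‖(C⁻¹)ᵀ‖ * ‖toEuc (Cᵀ *ᵥ x)‖ := norm_mulVec_le _ _
      _ ≤ (1 / Real.sqrt μ) * ‖toEuc (Cᵀ *ᵥ x)‖ :=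
          mul_le_mul_of_nonneg_right htr (norm_nonneg _)
  have h3 := mul_le_mul h2 h2 (norm_nonneg _) (by positivity)
  have h6 : (1 / Real.sqrt μ) * (1 / Real.sqrt μ) = 1 / μ := by
    rw [div_mul_div_comm, one_mul, Real.mul_self_sqrt hμ.le]
  rw [dot_self_eq_norm_sq, dot_self_eq_norm_sq]
  have h7 : ‖toEuc x‖ * ‖toEuc x‖ ≤ 1 / μ * (‖toEuc (Cᵀ *ᵥ x)‖ * ‖toEuc (Cᵀ *ᵥ x)‖) := by
    calc ‖toEuc x‖ * ‖toEuc x‖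
        ≤ (1 / Real.sqrt μ * ‖toEuc (Cᵀ *ᵥ x)‖) * (1 / Real.sqrt μ * ‖toEuc (Cᵀ *ᵥ x)‖) := h3
      _ = 1 / μ * (‖toEuc (Cᵀ *ᵥ x)‖ * ‖toEuc (Cᵀ *ᵥ x)‖) := by rw [← h6]; ring
  have h8 := mul_le_mul_of_nonneg_left h7 hμ.le
  calc μ * ‖toEuc x‖ ^ 2 = μ * (‖toEuc x‖ * ‖toEuc x‖) := by ring
    _ ≤ μ * (1 / μ * (‖toEuc (Cᵀ *ᵥ x)‖ * ‖toEuc (Cᵀ *ᵥ x)‖)) := h8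
    _ = ‖toEuc (Cᵀ *ᵥ x)‖ ^ 2 := by field_simp

lemma projMat_eq {n p : ℕ} (U : Submodule ℝ (EuclideanSpace ℝ (Fin n)))
    (BU : Matrix (Fin n) (Fin p) ℝ) (hBU1 : BUᵀ * BU = 1) (hBU2 : rowSpace BUᵀ = U) :
    projMat U = BU * BUᵀ := by
  have key : U.subtype ∘ₗ U.orthogonalProjectionOnto.toLinearMap
      = Matrix.toEuclideanLin (BU * BUᵀ) := by
    apply LinearMap.ext; intro x
    set xf : Fin n → ℝ := x.ofLp with hxf
    have hval : Matrix.toEuclideanLin (BU * BUᵀ) x = toEuc ((BU * BUᵀ) *ᵥ xf) := rfl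
    rw [hval]
    show U.starProjection x = toEuc ((BU * BUᵀ) *ᵥ xf)
    apply Submodule.eq_starProjection_of_mem_of_inner_eq_zero
    · rw [← hBU2]
      have hrep : toEuc ((BU * BUᵀ) *ᵥ xf)
          = ∑ j, (BUᵀ *ᵥ xf) j • toEuc (BUᵀ j) := by
        ext i
        have : (∑ j, (BUᵀ *ᵥ xf) j • toEuc (BUᵀ j)) i
            = ∑ j, (BUᵀ *ᵥ xf) j * BU i j := by
          rw [WithLp.ofLp_sum, Finset.sum_apply]
          simp [toEuc, Matrix.transpose_apply]
        rw [this]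
        simp only [toEuc, Matrix.mulVec, dotProduct, Matrix.mul_apply, Matrix.transpose_apply]
        simp only [Finset.sum_mul]
        rw [Finset.sum_comm]
        exact Finset.sum_congr rfl fun j _ => Finset.sum_congr rfl fun i' _ => by ring
      rw [hrep]
      exact Submodule.sum_mem _ fun j _ => Submodule.smul_mem _ _
        (Submodule.subset_span ⟨j, rfl⟩)
    · intro w hw
      rw [← hBU2] at hw
      have hgen : ∀ j : Fin p,
          (inner ℝ (x - toEuc ((BU * BUᵀ) *ᵥ xf)) (toEuc (BUᵀ j)) : ℝ) = 0 := by
        intro j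
        have hd : (xf - (BU * BUᵀ) *ᵥ xf) ⬝ᵥ (BUᵀ j) = 0 := by
          have hcol : ∀ u : Fin n → ℝ, u ⬝ᵥ (BUᵀ j) = (BUᵀ *ᵥ u) j := by
            intro u
            simp [Matrix.mulVec, dotProduct, Matrix.transpose_apply, mul_comm]
          rw [sub_dotProduct, hcol, hcol]
          have h2 : BUᵀ *ᵥ ((BU * BUᵀ) *ᵥ xf) = BUᵀ *ᵥ xf := by
            rw [Matrix.mulVec_mulVec, ← Matrix.mul_assoc, hBU1, Matrix.one_mul]
          rw [h2]
          ring
        calc (inner ℝ (x - toEuc ((BU * BUᵀ) *ᵥ xf)) (toEuc (BUᵀ j)) : ℝ)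
            = (xf - (BU * BUᵀ) *ᵥ xf) ⬝ᵥ (BUᵀ j) := (dot_eq_inner _ _).symm
          _ = 0 := hd
      induction hw using Submodule.span_induction with
      | mem w hwmem =>
          obtain ⟨j, rfl⟩ := hwmem
          exact hgen j
      | zero => simp
      | add u v hu hv hu' hv' => rw [inner_add_right, hu', hv', add_zero]
      | smul c u hu hu' => rw [inner_smul_right, hu', mul_zero]
  rw [projMat, key, LinearEquiv.symm_apply_apply]

end Auxiliary

open scoped Matrix.Norms.L2Operator in
/-- for subspaces `U`, `W` of `ℝ^n` of equal dimension (here both have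
orthonormal basis matrices with `p` columns), the operator norm `‖P_U − P_W‖` equals the
sine of the largest principal angle between `U` and `W`, where the cosines of the principal
angles are the singular values of `BUᵀ * BW` (so the largest angle corresponds to the
smallest singular value). -/
theorem opNorm_sub_proj_eq_sin_max_principal_angle (n p : ℕ) (hp : 0 < p)
    (U W : Submodule ℝ (EuclideanSpace ℝ (Fin n)))
    (BU BW : Matrix (Fin n) (Fin p) ℝ)
    (hBU1 : BUᵀ * BU = 1) (hBU2 : rowSpace BUᵀ = U)
    (hBW1 : BWᵀ * BW = 1) (hBW2 : rowSpace BWᵀ = W)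
    (hdim : Module.finrank ℝ U = Module.finrank ℝ W) :
    opNorm (projMat U - projMat W)
      = Real.sin (Real.arccos (svalAsc (BUᵀ * BW) ⟨0, hp⟩)) := by
  classical
  set C : Matrix (Fin p) (Fin p) ℝ := BUᵀ * BW with hCdef
  have hS : (Cᴴ * C).IsHermitian := Matrix.isHermitian_conjTranspose_mul_self C
  set ev : Fin p → ℝ := hS.eigenvalues with hevdef
  set j0 : Fin p := Tuple.sort ev ⟨0, hp⟩ with hj0
  set μ : ℝ := ev j0 with hμdef
  have hμ0 : 0 ≤ μ := Matrix.eigenvalues_conjTranspose_mul_self_nonneg C j0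
  have hμmin : ∀ i, μ ≤ ev i := fun i => sort_zero_min hp ev i
  have hconjC : Cᴴ = Cᵀ := Matrix.conjTranspose_eq_transpose_of_trivial C
  -- quadratic form of Cᴴ * C
  have hquadS : ∀ v : Fin p → ℝ, v ⬝ᵥ ((Cᴴ * C) *ᵥ v) = (C *ᵥ v) ⬝ᵥ (C *ᵥ v) := by
    intro v
    rw [hconjC, ← Matrix.mulVec_mulVec, dot_mulVec_eq, Matrix.transpose_transpose]
  have hgb : ∀ x : Fin p → ℝ, μ * (x ⬝ᵥ x) ≤ (C *ᵥ x) ⬝ᵥ (C *ᵥ x) := fun x =>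
    (quad_ge_mu hS hμmin x).trans_eq (hquadS x)
  have hgbT := goodBound_transpose C hgb
  -- norms of the isometries
  have h1n : ‖(1 : Matrix (Fin p) (Fin p) ℝ)‖ = 1 := norm_one_matrix hp
  have hBWn : ‖BW‖ = 1 := by
    apply norm_eq_one_of_sq (norm_nonneg _)
    rw [← norm_transpose_mul_self, hBW1, h1n]
  have hBUn : ‖BU‖ = 1 := by
    apply norm_eq_one_of_sq (norm_nonneg _)
    rw [← norm_transpose_mul_self, hBU1, h1n]
  have hBUtn : ‖BUᵀ‖ = 1 := by rw [normT, hBUn]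
  have hC1 : ‖C‖ ≤ 1 := by
    calc ‖C‖ ≤ ‖BUᵀ‖ * ‖BW‖ := Matrix.l2_opNorm_mul _ _
      _ = 1 := by rw [hBUtn, hBWn, one_mul]
  have hCle : ∀ z : Fin p → ℝ, (C *ᵥ z) ⬝ᵥ (C *ᵥ z) ≤ z ⬝ᵥ z := by
    intro z
    rw [dot_self_eq_norm_sq, dot_self_eq_norm_sq]
    have h1 := norm_mulVec_le C z
    calc ‖toEuc (C *ᵥ z)‖ ^ 2 ≤ (‖C‖ * ‖toEuc z‖) ^ 2 := pow_le_pow_left₀ (norm_nonneg _) h1 2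
      _ = ‖C‖ ^ 2 * ‖toEuc z‖ ^ 2 := mul_pow _ _ _
      _ ≤ 1 * ‖toEuc z‖ ^ 2 :=
          mul_le_mul_of_nonneg_right (by nlinarith [norm_nonneg C]) (sq_nonneg _)
      _ = ‖toEuc z‖ ^ 2 := one_mul _
  -- the eigenvector for the smallest eigenvalue
  set v : Fin p → ℝ := ⇑(hS.eigenvectorBasis j0) with hvdef
  have hv1 : v ⬝ᵥ v = 1 := eigenvector_dot_self hS j0
  have hev : (Cᴴ * C) *ᵥ v = μ • v := hS.mulVec_eigenvectorBasis j0
  have hmu : (C *ᵥ v) ⬝ᵥ (C *ᵥ v) = μ := by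
    rw [← hquadS, hev]
    simp [dotProduct_smul, hv1]
  have hμ1 : μ ≤ 1 := by
    have h1 := hCle v
    rw [hmu, hv1] at h1
    exact h1
  set t : ℝ := 1 - μ with htdef
  have ht0 : 0 ≤ t := by simp [htdef]; linarith
  -- matrices
  set P : Matrix (Fin n) (Fin n) ℝ := BU * BUᵀ with hPdef
  set Q : Matrix (Fin n) (Fin n) ℝ := BW * BWᵀ with hQdef
  set M : Matrix (Fin n) (Fin n) ℝ := P - Q with hMdef
  set R : Matrix (Fin p) (Fin n) ℝ := BWᵀ * (1 - P) with hRdef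
  have hPP : P * P = P := by
    rw [hPdef, Matrix.mul_assoc, ← Matrix.mul_assoc BUᵀ, hBU1, Matrix.one_mul]
  have hPsym : Pᵀ = P := by rw [hPdef, Matrix.transpose_mul, Matrix.transpose_transpose]
  have hMsym : Mᵀ = M := by
    rw [hMdef, Matrix.transpose_sub, hPsym, hQdef, Matrix.transpose_mul,
      Matrix.transpose_transpose]
  -- helper for simp-based algebra
  have h3 : ∀ {m' : Type} [Fintype m'] (X : Matrix (Fin p) m' ℝ), BUᵀ * (BU * X) = X := by
    intro m' _ X; rw [← Matrix.mul_assoc, hBU1, Matrix.one_mul]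
  have h4 : ∀ {m' : Type} [Fintype m'] (X : Matrix (Fin p) m' ℝ), BWᵀ * (BW * X) = X := by
    intro m' _ X; rw [← Matrix.mul_assoc, hBW1, Matrix.one_mul]
  have key : M * M = BU * ((1 - C * Cᵀ) * BUᵀ) + Rᵀ * R := by
    rw [hMdef, hRdef, hCdef, hPdef, hQdef]
    simp only [Matrix.transpose_mul, Matrix.transpose_sub, Matrix.transpose_one,
      Matrix.transpose_transpose, Matrix.mul_sub, Matrix.sub_mul, Matrix.mul_one,
      Matrix.one_mul, Matrix.mul_assoc, h3, h4]
    abel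
  have hRRt : R * Rᵀ = 1 - Cᵀ * C := by
    rw [hRdef, hCdef, hPdef]
    simp only [Matrix.transpose_mul, Matrix.transpose_sub, Matrix.transpose_one,
      Matrix.transpose_transpose, Matrix.mul_sub, Matrix.sub_mul, Matrix.mul_one,
      Matrix.one_mul, Matrix.mul_assoc, h3, h4, hBW1]
    abel
  -- the norm bound for 1 - Cᵀ * C
  have hone : ‖(1 : Matrix (Fin p) (Fin p) ℝ) - Cᵀ * C‖ ≤ t := by
    apply norm_le_of_quad_le
    · simp [Matrix.transpose_sub, Matrix.transpose_mul, Matrix.transpose_one,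
        Matrix.transpose_transpose]
    · intro z
      have hq : z ⬝ᵥ ((1 - Cᵀ * C) *ᵥ z) = z ⬝ᵥ z - (C *ᵥ z) ⬝ᵥ (C *ᵥ z) := by
        rw [Matrix.sub_mulVec, Matrix.one_mulVec, dotProduct_sub,
          ← Matrix.mulVec_mulVec, dot_mulVec_eq, Matrix.transpose_transpose]
      rw [hq]
      have := hCle z
      linarith
    · exact ht0
    · intro z
      have hq : z ⬝ᵥ ((1 - Cᵀ * C) *ᵥ z) = z ⬝ᵥ z - (C *ᵥ z) ⬝ᵥ (C *ᵥ z) := by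
        rw [Matrix.sub_mulVec, Matrix.one_mulVec, dotProduct_sub,
          ← Matrix.mulVec_mulVec, dot_mulVec_eq, Matrix.transpose_transpose]
      rw [hq]
      have := hgb z
      have hring : t * (z ⬝ᵥ z) = z ⬝ᵥ z - μ * (z ⬝ᵥ z) := by rw [htdef]; ring
      linarith
  have hRn : ‖R‖ * ‖R‖ ≤ t := by
    have h5 : ‖R * Rᵀ‖ = ‖R‖ * ‖R‖ := by
      have := norm_transpose_mul_self Rᵀ
      rw [Matrix.transpose_transpose, normT] at this
      exact this
    rw [← h5, hRRt]
    exact hone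
  -- upper bound for the quadratic form of M * M
  have hub : ∀ x : Fin n → ℝ, x ⬝ᵥ ((M * M) *ᵥ x) ≤ t * (x ⬝ᵥ x) := by
    intro x
    set y : Fin p → ℝ := BUᵀ *ᵥ x with hydef
    set z : Fin n → ℝ := x - P *ᵥ x with hzdef
    have hT1 : x ⬝ᵥ ((BU * ((1 - C * Cᵀ) * BUᵀ)) *ᵥ x)
        = y ⬝ᵥ y - (Cᵀ *ᵥ y) ⬝ᵥ (Cᵀ *ᵥ y) := by
      have e1 : (BU * ((1 - C * Cᵀ) * BUᵀ)) *ᵥ x = BU *ᵥ ((1 - C * Cᵀ) *ᵥ y) := by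
        rw [← Matrix.mulVec_mulVec x BU ((1 - C * Cᵀ) * BUᵀ),
          ← Matrix.mulVec_mulVec x (1 - C * Cᵀ) BUᵀ]
      rw [e1, dot_mulVec_eq BU x ((1 - C * Cᵀ) *ᵥ y), Matrix.sub_mulVec, Matrix.one_mulVec,
        dotProduct_sub, ← Matrix.mulVec_mulVec y C Cᵀ, dot_mulVec_eq C y (Cᵀ *ᵥ y)]
    have hT1b : x ⬝ᵥ ((BU * ((1 - C * Cᵀ) * BUᵀ)) *ᵥ x) ≤ t * (y ⬝ᵥ y) := by
      rw [hT1]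
      have := hgbT y
      have hring : t * (y ⬝ᵥ y) = y ⬝ᵥ y - μ * (y ⬝ᵥ y) := by rw [htdef]; ring
      linarith
    have hPz : P *ᵥ z = 0 := by
      rw [hzdef, Matrix.mulVec_sub, Matrix.mulVec_mulVec, hPP, sub_self]
    have hRxz : R *ᵥ x = BWᵀ *ᵥ z := by
      rw [hRdef, ← Matrix.mulVec_mulVec, Matrix.sub_mulVec, Matrix.one_mulVec, ← hzdef]
    have hRz : R *ᵥ z = BWᵀ *ᵥ z := by
      rw [hRdef, ← Matrix.mulVec_mulVec, Matrix.sub_mulVec, Matrix.one_mulVec, hPz, sub_zero]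
    have hT2 : x ⬝ᵥ ((Rᵀ * R) *ᵥ x) = (R *ᵥ x) ⬝ᵥ (R *ᵥ x) := by
      rw [← Matrix.mulVec_mulVec, dot_mulVec_eq, Matrix.transpose_transpose]
    have hT2b : x ⬝ᵥ ((Rᵀ * R) *ᵥ x) ≤ t * (z ⬝ᵥ z) := by
      rw [hT2]
      have heq : R *ᵥ x = R *ᵥ z := by rw [hRxz, hRz]
      rw [heq, dot_self_eq_norm_sq, dot_self_eq_norm_sq]
      have h6 := norm_mulVec_le R z
      nlinarith [norm_nonneg (toEuc z), norm_nonneg (toEuc (R *ᵥ z)), norm_nonneg R]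
    have hyy : y ⬝ᵥ y = x ⬝ᵥ (P *ᵥ x) := by
      have h7 := (dot_mulVec_eq BU x (BUᵀ *ᵥ x)).symm
      rw [Matrix.mulVec_mulVec] at h7
      exact h7
    have hPxPx : (P *ᵥ x) ⬝ᵥ (P *ᵥ x) = x ⬝ᵥ (P *ᵥ x) := by
      have h7 := dot_mulVec_eq P x (P *ᵥ x)
      rw [hPsym, Matrix.mulVec_mulVec, hPP] at h7
      exact h7.symm
    have hzz : z ⬝ᵥ z = x ⬝ᵥ x - x ⬝ᵥ (P *ᵥ x) := by
      rw [hzdef, sub_dotProduct, dotProduct_sub, dotProduct_sub, hPxPx,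
        dotProduct_comm (P *ᵥ x) x]
      ring
    have hsum : x ⬝ᵥ ((M * M) *ᵥ x)
        = x ⬝ᵥ ((BU * ((1 - C * Cᵀ) * BUᵀ)) *ᵥ x) + x ⬝ᵥ ((Rᵀ * R) *ᵥ x) := by
      rw [key, Matrix.add_mulVec, dotProduct_add]
    rw [hsum]
    have hx : t * (x ⬝ᵥ x) = t * (y ⬝ᵥ y) + t * (z ⬝ᵥ z) := by
      rw [hyy, hzz]; ring
    linarith
  -- M * M is symmetric and PSD
  have hMMsym : (M * M)ᵀ = M * M := by rw [Matrix.transpose_mul, hMsym]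
  have hMMquad : ∀ x : Fin n → ℝ, x ⬝ᵥ ((M * M) *ᵥ x) = (M *ᵥ x) ⬝ᵥ (M *ᵥ x) := by
    intro x
    rw [← Matrix.mulVec_mulVec, dot_mulVec_eq, hMsym]
  have hMMpsd : ∀ x : Fin n → ℝ, 0 ≤ x ⬝ᵥ ((M * M) *ᵥ x) := fun x => by
    rw [hMMquad]; exact dot_self_nonneg' _
  have hMMle : ‖M * M‖ ≤ t := norm_le_of_quad_le _ hMMsym hMMpsd ht0 hub
  -- lower bound: the witness x = BW *ᵥ v
  have hMMge : t ≤ ‖M * M‖ := by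
    set x : Fin n → ℝ := BW *ᵥ v with hxdef
    have hxx : x ⬝ᵥ x = 1 := by
      rw [hxdef, dot_mulVec_eq, Matrix.mulVec_mulVec, hBW1, Matrix.one_mulVec, hv1]
    have hQx : Q *ᵥ x = x := by
      rw [hQdef, hxdef, Matrix.mulVec_mulVec, Matrix.mul_assoc, hBW1, Matrix.mul_one]
    have hPx : P *ᵥ x = BU *ᵥ (C *ᵥ v) := by
      rw [hPdef, hxdef, Matrix.mulVec_mulVec, Matrix.mul_assoc, ← hCdef,
        ← Matrix.mulVec_mulVec]
    have hMx : M *ᵥ x = BU *ᵥ (C *ᵥ v) - x := by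
      rw [hMdef, Matrix.sub_mulVec, hPx, hQx]
    have hBUu : ∀ u u' : Fin p → ℝ, (BU *ᵥ u) ⬝ᵥ (BU *ᵥ u') = u ⬝ᵥ u' := by
      intro u u'
      rw [dot_mulVec_eq, Matrix.mulVec_mulVec, hBU1, Matrix.one_mulVec]
    have hxBUu : x ⬝ᵥ (BU *ᵥ (C *ᵥ v)) = μ := by
      rw [dot_mulVec_eq BU x (C *ᵥ v), hxdef, Matrix.mulVec_mulVec, ← hCdef]
      exact hmu
    have haa : (BU *ᵥ (C *ᵥ v)) ⬝ᵥ (BU *ᵥ (C *ᵥ v)) = μ := by rw [hBUu, hmu]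
    have hax : (BU *ᵥ (C *ᵥ v)) ⬝ᵥ x = μ := by
      rw [dotProduct_comm]; exact hxBUu
    have hquadx : x ⬝ᵥ ((M * M) *ᵥ x) = t := by
      rw [hMMquad, hMx, sub_dotProduct, dotProduct_sub, dotProduct_sub,
        haa, hax, hxBUu, hxx, htdef]
      ring
    calc t = x ⬝ᵥ ((M * M) *ᵥ x) := hquadx.symm
      _ ≤ ‖M * M‖ * (x ⬝ᵥ x) := quad_le_norm _ _
      _ = ‖M * M‖ := by rw [hxx, mul_one]
  -- conclusion
  have hMMt : ‖M * M‖ = t := le_antisymm hMMle hMMge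
  have h9 := norm_transpose_mul_self M
  rw [hMsym] at h9
  have hMn : ‖M‖ * ‖M‖ = t := by rw [← h9, hMMt]
  have hPU : projMat U = P := projMat_eq U BU hBU1 hBU2
  have hQW : projMat W = Q := projMat_eq W BW hBW1 hBW2
  have hop : opNorm (projMat U - projMat W) = ‖M‖ := by
    rw [hPU, hQW]
    exact (Matrix.l2_opNorm_def (P - Q)).symm
  have hsval : svalAsc C ⟨0, hp⟩ = Real.sqrt μ := rfl
  rw [hop, hsval, Real.sin_arccos, Real.sq_sqrt hμ0]
  calc ‖M‖ = Real.sqrt (‖M‖ * ‖M‖) := (Real.sqrt_mul_self (norm_nonneg _)).symm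
    _ = Real.sqrt (1 - μ) := by rw [hMn, htdef]
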